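/- In the q → 1 limit of the q-deformed Bannai–Ito algebra, i.e., for elements Ĩ₁, Ĩ₂, Ĩ₃ of an associative algebra satisfying {Ĩ_i, Ĩ_j} = Ĩ_k + ω_k (ordinary anticommutator) for even permutations (i,j,k), the element C̃ = Ĩ₁² + Ĩ₂² + Ĩ₃² commutes with Ĩ₁, Ĩ₂ and Ĩ₃. -/
import Mathlib

lemma sq_comm_aux {A : Type*} [Ring A] [Algebra ℂ A]
    (X Y Z : A) (ω : ℂ) (h : X * Y + Y * X = Z + ω • (1 : A)) :
    Y ^ 2 * X - X * Y ^ 2 = Y * Z - Z * Y := by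
  have key : Y * (X * Y + Y * X) - (X * Y + Y * X) * Y
      = Y * (Z + ω • (1 : A)) - (Z + ω • (1 : A)) * Y := by rw [h]
  have hs : Y * (ω • (1 : A)) = (ω • (1 : A)) * Y := by
    rw [mul_smul_comm, smul_mul_assoc, mul_one, one_mul]
  calc Y ^ 2 * X - X * Y ^ 2
      = Y * (X * Y + Y * X) - (X * Y + Y * X) * Y := by noncomm_ring
    _ = Y * (Z + ω • (1 : A)) - (Z + ω • (1 : A)) * Y := key
    _ = Y * Z - Z * Y + (Y * (ω • (1 : A)) - (ω • (1 : A)) * Y) := by noncomm_ring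
    _ = Y * Z - Z * Y := by rw [hs]; noncomm_ring

theorem stmt_15 {A : Type*} [Ring A] [Algebra ℂ A]
    (I₁ I₂ I₃ : A) (ω₁ ω₂ ω₃ : ℂ)
    (h12 : I₁ * I₂ + I₂ * I₁ = I₃ + ω₃ • (1 : A))
    (h23 : I₂ * I₃ + I₃ * I₂ = I₁ + ω₁ • (1 : A))
    (h31 : I₃ * I₁ + I₁ * I₃ = I₂ + ω₂ • (1 : A)) :
    (I₁ ^ 2 + I₂ ^ 2 + I₃ ^ 2) * I₁ = I₁ * (I₁ ^ 2 + I₂ ^ 2 + I₃ ^ 2) ∧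
    (I₁ ^ 2 + I₂ ^ 2 + I₃ ^ 2) * I₂ = I₂ * (I₁ ^ 2 + I₂ ^ 2 + I₃ ^ 2) ∧
    (I₁ ^ 2 + I₂ ^ 2 + I₃ ^ 2) * I₃ = I₃ * (I₁ ^ 2 + I₂ ^ 2 + I₃ ^ 2) := by
  have h21 : I₂ * I₁ + I₁ * I₂ = I₃ + ω₃ • (1 : A) := by rw [add_comm]; exact h12
  have h32 : I₃ * I₂ + I₂ * I₃ = I₁ + ω₁ • (1 : A) := by rw [add_comm]; exact h23
  have h13 : I₁ * I₃ + I₃ * I₁ = I₂ + ω₂ • (1 : A) := by rw [add_comm]; exact h31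
  have a21 := sq_comm_aux I₁ I₂ I₃ ω₃ h12
  have a31 := sq_comm_aux I₁ I₃ I₂ ω₂ h13
  have a12 := sq_comm_aux I₂ I₁ I₃ ω₃ h21
  have a32 := sq_comm_aux I₂ I₃ I₁ ω₁ h23
  have a13 := sq_comm_aux I₃ I₁ I₂ ω₂ h31
  have a23 := sq_comm_aux I₃ I₂ I₁ ω₁ h32
  refine ⟨?_, ?_, ?_⟩ <;>
  · rw [← sub_eq_zero]
    first
    | (have e : (I₁ ^ 2 + I₂ ^ 2 + I₃ ^ 2) * I₁ - I₁ * (I₁ ^ 2 + I₂ ^ 2 + I₃ ^ 2)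
          = (I₂ ^ 2 * I₁ - I₁ * I₂ ^ 2) + (I₃ ^ 2 * I₁ - I₁ * I₃ ^ 2) := by noncomm_ring
       rw [e, a21, a31]; noncomm_ring)
    | (have e : (I₁ ^ 2 + I₂ ^ 2 + I₃ ^ 2) * I₂ - I₂ * (I₁ ^ 2 + I₂ ^ 2 + I₃ ^ 2)
          = (I₁ ^ 2 * I₂ - I₂ * I₁ ^ 2) + (I₃ ^ 2 * I₂ - I₂ * I₃ ^ 2) := by noncomm_ring
       rw [e, a12, a32]; noncomm_ring)
    | (have e : (I₁ ^ 2 + I₂ ^ 2 + I₃ ^ 2) * I₃ - I₃ * (I₁ ^ 2 + I₂ ^ 2 + I₃ ^ 2)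
          = (I₁ ^ 2 * I₃ - I₃ * I₁ ^ 2) + (I₂ ^ 2 * I₃ - I₃ * I₂ ^ 2) := by noncomm_ring
       rw [e, a13, a23]; noncomm_ring)
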